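/- Let n ≥ 2. For every partition [n] = S ∪ T into two disjoint nonempty sets, u_{S,T}·M = 0, i.e., ∑_{i≠j} u_{S,T}(i,j)·M̄_{i,j} is the zero (n−1)×(n−1) matrix. -/
import Mathlib


open Finset

/-- The matrix `M̄_{i,j}` (for `i ≠ j` in `[n]`, with the last index playing the role of `n`). -/
def Mbar (n : ℕ) (i j : Fin n) : Matrix (Fin (n - 1)) (Fin (n - 1)) ℝ :=
  Matrix.of fun a b =>
    if (a : ℕ) = (i : ℕ) ∧ (b : ℕ) = (j : ℕ) then 1
    else if (a : ℕ) = (i : ℕ) ∧ (j : ℕ) = n - 1 then -1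
    else if (i : ℕ) = n - 1 ∧ (b : ℕ) = (j : ℕ) then -1
    else 0

/-- `uM = ∑_{i ≠ j} u(i,j) · M̄_{i,j}`. -/
def uDotM (n : ℕ) (u : Fin n → Fin n → ℤ) : Matrix (Fin (n - 1)) (Fin (n - 1)) ℝ :=
  ∑ i, ∑ j, if i = j then 0 else (u i j : ℝ) • Mbar n i j

/-- The vector `u_{S,T}` for the partition `[n] = S ∪ Sᶜ`. -/
def uST (n : ℕ) (S : Finset (Fin n)) (i j : Fin n) : ℤ :=
  if i ∈ S ∧ j ∉ S then 1 else if i ∉ S ∧ j ∈ S then -1 else 0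

theorem stmt5 (n : ℕ) (hn : 2 ≤ n) (S : Finset (Fin n))
    (hS : S.Nonempty) (hT : Sᶜ.Nonempty) :
    uDotM n (uST n S) = 0 := by
  ext a b
  have ha : (a : ℕ) < n - 1 := a.isLt
  have hb : (b : ℕ) < n - 1 := b.isLt
  set A : Fin n := ⟨a, by omega⟩ with hA
  set B : Fin n := ⟨b, by omega⟩ with hB
  set E : Fin n := ⟨n - 1, by omega⟩ with hE
  have key : ∀ i j : Fin n,
      (if i = j then (0 : Matrix (Fin (n-1)) (Fin (n-1)) ℝ)
        else (uST n S i j : ℝ) • Mbar n i j) a b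
      = (uST n S i j : ℝ) * ((if i = A then (1:ℝ) else 0) * (if j = B then 1 else 0))
        - (uST n S i j : ℝ) * ((if i = A then (1:ℝ) else 0) * (if j = E then 1 else 0))
        - (uST n S i j : ℝ) * ((if i = E then (1:ℝ) else 0) * (if j = B then 1 else 0)) := by
    intro i j
    have hAeq : (i = A) ↔ ((a : ℕ) = (i : ℕ)) := by
      constructor
      · rintro rfl; rfl
      · intro h; exact Fin.ext h.symm
    have hBeq : (j = B) ↔ ((b : ℕ) = (j : ℕ)) := by
      constructor
      · rintro rfl; rfl
      · intro h; exact Fin.ext h.symm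
    have hEjeq : (j = E) ↔ ((j : ℕ) = n - 1) := by
      constructor
      · rintro rfl; rfl
      · intro h; exact Fin.ext h
    have hEieq : (i = E) ↔ ((i : ℕ) = n - 1) := by
      constructor
      · rintro rfl; rfl
      · intro h; exact Fin.ext h
    by_cases hij : i = j
    · subst hij
      have h0 : uST n S i i = 0 := by simp [uST]
      simp [h0]
    · simp only [if_neg hij, Matrix.smul_apply, Mbar, Matrix.of_apply]
      rw [show ((if i = A then (1:ℝ) else 0)) = (if (a:ℕ) = (i:ℕ) then 1 else 0) by
        simp [hAeq],
        show ((if j = B then (1:ℝ) else 0)) = (if (b:ℕ) = (j:ℕ) then 1 else 0) by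
        simp [hBeq],
        show ((if j = E then (1:ℝ) else 0)) = (if (j:ℕ) = n - 1 then 1 else 0) by
        simp [hEjeq],
        show ((if i = E then (1:ℝ) else 0)) = (if (i:ℕ) = n - 1 then 1 else 0) by
        simp [hEieq]]
      have h1 : ¬((a : ℕ) = (i : ℕ) ∧ (i : ℕ) = n - 1) := by omega
      have h2 : ¬((b : ℕ) = (j : ℕ) ∧ (j : ℕ) = n - 1) := by omega
      split_ifs <;> simp_all
  simp only [uDotM, Matrix.sum_apply, key]
  simp only [Finset.sum_sub_distrib]
  simp only [mul_ite, mul_one, mul_zero, ite_mul, zero_mul, one_mul]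
  simp only [Finset.sum_ite_eq', Finset.mem_univ, if_true]
  have final : (uST n S A B : ℝ) - (uST n S A E : ℝ) - (uST n S E B : ℝ) = 0 := by
    simp only [uST]
    by_cases h1 : A ∈ S <;> by_cases h2 : B ∈ S <;> by_cases h3 : E ∈ S <;>
      simp [h1, h2, h3]
  simp only [Matrix.zero_apply]
  linarith [final]
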